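/- arXiv:2409.16713 — 10 statements merged into one kernel-verified Lean document; each statement's English description precedes it below -/
import Mathlib

section
/- Let Γ be a uniform coincidence constraint (a set of profiles A → ℕ) that contains the zero profile and is closed under pointwise addition. If E₀ : C → M satisfies Γ, then for every function g : M → M the composition g ∘ E₀ also satisfies Γ. (Merging whole value-classes of a consistent database preserves consistency.) -/
/-- If a uniform coincidence constraint `Γ` contains the zero profile and is closed
under pointwise addition, and `E₀ : C → M` satisfies `Γ`, then for every `g : M → M`
the composition `g ∘ E₀` also satisfies `Γ`. -/
theorem stmt_1 {C A M : Type*} [Finite C] (lab : C → A)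
    (Γ : Set (A → ℕ))
    (hzero : (fun _ => 0) ∈ Γ)
    (hadd : ∀ p q : A → ℕ, p ∈ Γ → q ∈ Γ → (fun a => p a + q a) ∈ Γ)
    (E₀ : C → M)
    (hE₀ : ∀ v : M, (fun a => {c : C | lab c = a ∧ E₀ c = v}.ncard) ∈ Γ)
    (g : M → M) :
    ∀ v : M, (fun a => {c : C | lab c = a ∧ g (E₀ c) = v}.ncard) ∈ Γ := by
  classical
  haveI : Fintype C := Fintype.ofFinite C
  -- closure under finite sums
  have hsum : ∀ (S : Finset M) (f : M → A → ℕ), (∀ u ∈ S, f u ∈ Γ) →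
      (fun a => ∑ u ∈ S, f u a) ∈ Γ := by
    intro S
    induction S using Finset.induction_on with
    | empty => intro f _; simpa using hzero
    | insert x s hx ih =>
      intro f hf
      have := hadd (f x) (fun a => ∑ u ∈ s, f u a) (hf x (by simp))
        (ih f fun u hu => hf u (by simp [hu]))
      simpa [Finset.sum_insert hx] using this
  intro v
  set S : Finset M := (Finset.univ.image E₀).filter (fun u => g u = v) with hS
  have key : (fun a => {c : C | lab c = a ∧ g (E₀ c) = v}.ncard) =
      (fun a => ∑ u ∈ S, {c : C | lab c = a ∧ E₀ c = u}.ncard) := by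
    funext a
    have hcard : ∀ (P : C → Prop) [DecidablePred P],
        {c : C | P c}.ncard = (Finset.univ.filter P).card := by
      intro P _
      rw [Set.ncard_eq_toFinset_card']
      congr 1
      ext c; simp
    rw [hcard (fun c => lab c = a ∧ g (E₀ c) = v)]
    have := Finset.card_eq_sum_card_fiberwise
      (s := Finset.univ.filter (fun c => lab c = a ∧ g (E₀ c) = v)) (t := S) (f := E₀)
      (by intro c hc; simp only [Finset.mem_coe, Finset.mem_filter, Finset.mem_univ, true_and] at hc
          simp [hS, hc.2])
    rw [this]
    apply Finset.sum_congr rfl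
    intro u hu
    rw [hcard (fun c => lab c = a ∧ E₀ c = u)]
    congr 1
    ext c
    simp only [Finset.mem_filter, Finset.mem_univ, true_and, hS] at hu ⊢
    constructor
    · rintro ⟨⟨h1, _⟩, h3⟩; exact ⟨h1, h3⟩
    · rintro ⟨h1, h3⟩; exact ⟨⟨h1, h3 ▸ hu.2⟩, h3⟩
  rw [key]
  exact hsum S _ fun u _ => hE₀ u
end

section
/- Let (M, δ) be a metric space, and let Γ be a uniform coincidence constraint that contains the zero profile and is closed under pointwise addition. Let D : C → M be a database. Then for every repair E₀ of D there exists a repair E of D such that every value used by E is a value of D (i.e., E(C) ⊆ D(C)) and κ(D, E, δ) ≤ 2·κ(D, E₀, δ). In particular, if any repair exists, there exists a 2-optimal repair using only values of D. -/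
/-- In a metric space `(M, dist)`, for a uniform coincidence constraint `Γ` containing
the zero profile and closed under pointwise addition, every repair `E₀` of a database
`D : C → M` gives rise to a repair `E` that uses only values of `D` and whose cost is
at most twice the cost of `E₀`. -/
theorem stmt_2 {C A M : Type*} [Fintype C] [MetricSpace M]
    (lab : C → A) (w : A → ℝ) (hw : ∀ a, 0 ≤ w a)
    (Γ : Set (A → ℕ))
    (hzero : (fun _ => 0) ∈ Γ)
    (hadd : ∀ p q : A → ℕ, p ∈ Γ → q ∈ Γ → (fun a => p a + q a) ∈ Γ)
    (D : C → M) (E₀ : C → M)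
    (hE₀ : ∀ v : M, (fun a => {c : C | lab c = a ∧ E₀ c = v}.ncard) ∈ Γ) :
    ∃ E : C → M,
      (∀ v : M, (fun a => {c : C | lab c = a ∧ E c = v}.ncard) ∈ Γ) ∧
      (∀ c : C, ∃ c' : C, E c = D c') ∧
      ∑ c : C, w (lab c) * dist (D c) (E c) ≤
        2 * ∑ c : C, w (lab c) * dist (D c) (E₀ c) := by
  classical
  have key : ∀ v : M, (∃ c, E₀ c = v) →
      ∃ c', E₀ c' = v ∧ ∀ c'', E₀ c'' = v → dist (D c') v ≤ dist (D c'') v := by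
    rintro v ⟨c, hc⟩
    obtain ⟨c', hc', hmin⟩ := Finset.exists_min_image
      (Finset.univ.filter fun c => E₀ c = v) (fun c => dist (D c) v) ⟨c, by simp [hc]⟩
    exact ⟨c', by simpa using hc', fun c'' h'' => hmin c'' (by simp [h''])⟩
  set f : M → M := fun v => if h : ∃ c, E₀ c = v then D (Classical.choose (key v h)) else v
    with hf
  refine ⟨fun c => f (E₀ c), ?_, ?_, ?_⟩
  · intro u
    set V := Finset.image E₀ Finset.univ with hV
    set T := V.filter (fun v => f v = u) with hT
    have hcount : ∀ a, {c : C | lab c = a ∧ f (E₀ c) = u}.ncard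
        = ∑ v ∈ T, {c : C | lab c = a ∧ E₀ c = v}.ncard := by
      intro a
      have h1 : {c : C | lab c = a ∧ f (E₀ c) = u}.ncard
          = (Finset.univ.filter fun c => lab c = a ∧ f (E₀ c) = u).card := by
        rw [Set.ncard_eq_toFinset_card']; congr 1; ext c; simp
      rw [h1, Finset.card_eq_sum_card_fiberwise (f := E₀) (t := T)]
      · refine Finset.sum_congr rfl fun v hv => ?_
        have hfv : f v = u := (Finset.mem_filter.mp hv).2
        have h2 : {c : C | lab c = a ∧ E₀ c = v}.ncard
            = (Finset.univ.filter fun c => lab c = a ∧ E₀ c = v).card := by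
          rw [Set.ncard_eq_toFinset_card']; congr 1; ext c; simp
        rw [h2]
        congr 1
        ext c
        simp only [Finset.mem_filter, Finset.mem_univ, true_and]
        constructor
        · rintro ⟨⟨ha, _⟩, hev⟩; exact ⟨ha, hev⟩
        · rintro ⟨ha, hev⟩; exact ⟨⟨ha, hev ▸ hfv⟩, hev⟩
      · intro c hc
        simp only [Finset.mem_coe, Finset.mem_filter, Finset.mem_univ, true_and] at hc
        rw [hT, Finset.mem_coe, Finset.mem_filter]
        exact ⟨Finset.mem_image.mpr ⟨c, Finset.mem_univ c, rfl⟩, hc.2⟩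
    have hsum : ∀ s : Finset M,
        (fun a => ∑ v ∈ s, {c : C | lab c = a ∧ E₀ c = v}.ncard) ∈ Γ := by
      intro s
      induction s using Finset.induction with
      | empty => simpa using hzero
      | @insert x s hx ih =>
        have := hadd _ _ (hE₀ x) ih
        simpa [Finset.sum_insert hx] using this
    have := hsum T
    convert this using 1
    funext a; exact hcount a
  · intro c
    have h : ∃ c', E₀ c' = E₀ c := ⟨c, rfl⟩
    exact ⟨Classical.choose (key (E₀ c) h), by simp [hf, h]⟩
  · have hle : ∀ c, dist (D c) (f (E₀ c)) ≤ 2 * dist (D c) (E₀ c) := by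
      intro c
      have h : ∃ c', E₀ c' = E₀ c := ⟨c, rfl⟩
      obtain ⟨hc', hmin⟩ := Classical.choose_spec (key (E₀ c) h)
      have hfe : f (E₀ c) = D (Classical.choose (key (E₀ c) h)) := by simp [hf, h]
      rw [hfe]
      have h3 := hmin c rfl
      calc dist (D c) (D (Classical.choose (key (E₀ c) h)))
          ≤ dist (D c) (E₀ c) + dist (E₀ c) (D (Classical.choose (key (E₀ c) h))) :=
            dist_triangle _ _ _
        _ ≤ dist (D c) (E₀ c) + dist (D c) (E₀ c) := by
            rw [dist_comm (E₀ c)]; linarith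
        _ = 2 * dist (D c) (E₀ c) := by ring
    calc ∑ c : C, w (lab c) * dist (D c) (f (E₀ c))
        ≤ ∑ c : C, w (lab c) * (2 * dist (D c) (E₀ c)) :=
          Finset.sum_le_sum fun c _ => mul_le_mul_of_nonneg_left (hle c) (hw _)
      _ = 2 * ∑ c : C, w (lab c) * dist (D c) (E₀ c) := by
          rw [Finset.mul_sum]; exact Finset.sum_congr rfl fun c _ => by ring
end

section
/- Let δ be a nonnegative distance function on a set M, Γ a coincidence constraint over M, and D : C → M a database. Let T be a finite index set, μ : T → ℝ a probability weight function (μ(t) ≥ 0 and ∑_{t∈T} μ(t) = 1), and for each t ∈ T let δ_t : M × M → ℝ satisfy δ(u, v) ≤ δ_t(u, v) for all u, v ∈ M. Assume K ≥ 0 is such that ∑_{t∈T} μ(t)·δ_t(u, v) ≤ K·δ(u, v) for all u, v ∈ M. For each t let E_t be a repair of D that minimizes cost with respect to δ_t (κ(D, E_t, δ_t) ≤ κ(D, E', δ_t) for every repair E'), and let E_opt be any repair of D. Then ∑_{t∈T} μ(t)·κ(D, E_t, δ) ≤ K·κ(D, E_opt, δ). -/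
/-- Expected-cost bound for the random tree-embedding repair scheme: if each `δ_t`
dominates `δ`, the `μ`-average of the `δ_t` is at most `K·δ`, and each `E t` is an
optimal repair w.r.t. `δ_t`, then the `μ`-average of the `δ`-costs of the `E t` is at
most `K` times the `δ`-cost of any repair `E_opt`. -/
theorem stmt_4 {C A M T : Type*} [Fintype C] [Fintype T]
    (lab : C → A) (w : A → ℝ) (hw : ∀ a, 0 ≤ w a)
    (δ : M → M → ℝ) (hδ : ∀ u v, 0 ≤ δ u v)
    (Γ : M → Set (A → ℕ)) (D : C → M)
    (μ : T → ℝ) (hμ : ∀ t, 0 ≤ μ t) (hμ1 : ∑ t : T, μ t = 1)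
    (δt : T → M → M → ℝ) (hδt : ∀ t u v, δ u v ≤ δt t u v)
    (K : ℝ) (hK : 0 ≤ K)
    (hKbound : ∀ u v, ∑ t : T, μ t * δt t u v ≤ K * δ u v)
    (E : T → C → M)
    (hE : ∀ t, ∀ v : M, (fun a => {c : C | lab c = a ∧ E t c = v}.ncard) ∈ Γ v)
    (hEmin : ∀ t, ∀ E' : C → M,
      (∀ v : M, (fun a => {c : C | lab c = a ∧ E' c = v}.ncard) ∈ Γ v) →
      ∑ c : C, w (lab c) * δt t (D c) (E t c) ≤
        ∑ c : C, w (lab c) * δt t (D c) (E' c))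
    (Eopt : C → M)
    (hEopt : ∀ v : M, (fun a => {c : C | lab c = a ∧ Eopt c = v}.ncard) ∈ Γ v) :
    ∑ t : T, μ t * ∑ c : C, w (lab c) * δ (D c) (E t c) ≤
      K * ∑ c : C, w (lab c) * δ (D c) (Eopt c) := by
  calc ∑ t : T, μ t * ∑ c : C, w (lab c) * δ (D c) (E t c)
      ≤ ∑ t : T, μ t * ∑ c : C, w (lab c) * δt t (D c) (Eopt c) := by
        apply Finset.sum_le_sum
        intro t _
        apply mul_le_mul_of_nonneg_left _ (hμ t)
        calc ∑ c : C, w (lab c) * δ (D c) (E t c)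
            ≤ ∑ c : C, w (lab c) * δt t (D c) (E t c) :=
              Finset.sum_le_sum fun c _ =>
                mul_le_mul_of_nonneg_left (hδt t _ _) (hw _)
          _ ≤ ∑ c : C, w (lab c) * δt t (D c) (Eopt c) := hEmin t Eopt hEopt
    _ = ∑ c : C, w (lab c) * ∑ t : T, μ t * δt t (D c) (Eopt c) := by
        simp_rw [Finset.mul_sum]
        rw [Finset.sum_comm]
        congr 1; ext c; congr 1; ext t; ring
    _ ≤ ∑ c : C, w (lab c) * (K * δ (D c) (Eopt c)) :=
        Finset.sum_le_sum fun c _ =>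
          mul_le_mul_of_nonneg_left (hKbound _ _) (hw _)
    _ = K * ∑ c : C, w (lab c) * δ (D c) (Eopt c) := by
        rw [Finset.mul_sum]; congr 1; ext c; ring
end

section
/- Let δ be a nonnegative distance function on a set M, Γ a coincidence constraint over M, and D : C → M a database. Let T be a finite index set, μ : T → ℝ a probability weight function (μ(t) ≥ 0 and ∑_{t∈T} μ(t) = 1), and for each t ∈ T let δ_t : M × M → ℝ satisfy δ(u, v) ≤ δ_t(u, v) for all u, v ∈ M. Assume K ≥ 0 is such that ∑_{t∈T} μ(t)·δ_t(u, v) ≤ K·δ(u, v) for all u, v ∈ M. For each t let E_t be a repair of D minimizing cost with respect to δ_t, and let E_opt be a repair of D with κ(D, E_opt, δ) > 0. Then ∑_{t ∈ T, κ(D, E_t, δ) ≤ 2K·κ(D, E_opt, δ)} μ(t) ≥ 1/2; that is, with probability at least 1/2 over the choice of t, the repair E_t has cost at most 2K times the cost of E_opt under δ. -/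
open Classical in
/-- Markov-inequality step: with probability at least `1/2` over the random choice of
`t`, the optimal repair `E t` for `δ_t` has `δ`-cost at most `2K` times the `δ`-cost of
the repair `E_opt`. -/
theorem stmt_5 {C A M T : Type*} [Fintype C] [Fintype T]
    (lab : C → A) (w : A → ℝ) (hw : ∀ a, 0 ≤ w a)
    (δ : M → M → ℝ) (hδ : ∀ u v, 0 ≤ δ u v)
    (Γ : M → Set (A → ℕ)) (D : C → M)
    (μ : T → ℝ) (hμ : ∀ t, 0 ≤ μ t) (hμ1 : ∑ t : T, μ t = 1)
    (δt : T → M → M → ℝ) (hδt : ∀ t u v, δ u v ≤ δt t u v)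
    (K : ℝ) (hK : 0 ≤ K)
    (hKbound : ∀ u v, ∑ t : T, μ t * δt t u v ≤ K * δ u v)
    (E : T → C → M)
    (hE : ∀ t, ∀ v : M, (fun a => {c : C | lab c = a ∧ E t c = v}.ncard) ∈ Γ v)
    (hEmin : ∀ t, ∀ E' : C → M,
      (∀ v : M, (fun a => {c : C | lab c = a ∧ E' c = v}.ncard) ∈ Γ v) →
      ∑ c : C, w (lab c) * δt t (D c) (E t c) ≤
        ∑ c : C, w (lab c) * δt t (D c) (E' c))
    (Eopt : C → M)
    (hEopt : ∀ v : M, (fun a => {c : C | lab c = a ∧ Eopt c = v}.ncard) ∈ Γ v)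
    (hpos : 0 < ∑ c : C, w (lab c) * δ (D c) (Eopt c)) :
    (1 : ℝ) / 2 ≤
      ∑ t ∈ Finset.univ.filter (fun t : T =>
          ∑ c : C, w (lab c) * δ (D c) (E t c) ≤
            2 * K * ∑ c : C, w (lab c) * δ (D c) (Eopt c)),
        μ t := by

  set OPT := ∑ c : C, w (lab c) * δ (D c) (Eopt c) with hOPT
  set X : T → ℝ := fun t => ∑ c : C, w (lab c) * δ (D c) (E t c) with hX
  have hXnn : ∀ t, 0 ≤ X t := fun t =>
    Finset.sum_nonneg fun c _ => mul_nonneg (hw _) (hδ _ _)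
  have hexp : ∑ t : T, μ t * X t ≤ K * OPT := by
    calc ∑ t : T, μ t * X t
        ≤ ∑ t : T, μ t * ∑ c : C, w (lab c) * δt t (D c) (Eopt c) := by
          refine Finset.sum_le_sum fun t _ => mul_le_mul_of_nonneg_left ?_ (hμ t)
          refine le_trans ?_ (hEmin t Eopt hEopt)
          exact Finset.sum_le_sum fun c _ =>
            mul_le_mul_of_nonneg_left (hδt t _ _) (hw _)
      _ = ∑ c : C, w (lab c) * ∑ t : T, μ t * δt t (D c) (Eopt c) := by
          simp only [Finset.mul_sum]
          rw [Finset.sum_comm]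
          refine Finset.sum_congr rfl fun c _ => Finset.sum_congr rfl fun t _ => by ring
      _ ≤ ∑ c : C, w (lab c) * (K * δ (D c) (Eopt c)) :=
          Finset.sum_le_sum fun c _ =>
            mul_le_mul_of_nonneg_left (hKbound _ _) (hw _)
      _ = K * OPT := by
          rw [hOPT, Finset.mul_sum]
          exact Finset.sum_congr rfl fun c _ => by ring
  by_contra h
  push_neg at h
  set S := Finset.univ.filter (fun t : T => X t ≤ 2 * K * OPT) with hS
  have hsplit : ∑ t ∈ S, μ t + ∑ t ∈ Sᶜ, μ t = 1 := by
    rw [Finset.sum_add_sum_compl]; exact hμ1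
  have hS' : (1:ℝ)/2 < ∑ t ∈ Sᶜ, μ t := by linarith
  have hcompl : ∀ t ∈ Sᶜ, 2 * K * OPT < X t := by
    intro t ht
    simp only [hS, Finset.mem_compl, Finset.mem_filter, Finset.mem_univ, true_and,
      not_le] at ht
    exact ht
  have hlow : 2 * K * OPT * (∑ t ∈ Sᶜ, μ t) ≤ ∑ t : T, μ t * X t := by
    calc 2 * K * OPT * (∑ t ∈ Sᶜ, μ t) = ∑ t ∈ Sᶜ, μ t * (2 * K * OPT) := by
          rw [Finset.mul_sum]; exact Finset.sum_congr rfl fun t _ => by ring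
      _ ≤ ∑ t ∈ Sᶜ, μ t * X t :=
          Finset.sum_le_sum fun t ht =>
            mul_le_mul_of_nonneg_left (le_of_lt (hcompl t ht)) (hμ t)
      _ ≤ ∑ t : T, μ t * X t :=
          Finset.sum_le_sum_of_subset_of_nonneg (Finset.subset_univ _)
            (fun t _ _ => mul_nonneg (hμ t) (hXnn t))
  rcases eq_or_lt_of_le hK with hK0 | hKpos
  · -- K = 0
    have hKO : K * OPT = 0 := by rw [← hK0]; ring
    have hzero : ∑ t : T, μ t * X t = 0 :=
      le_antisymm (by linarith)
        (Finset.sum_nonneg fun t _ => mul_nonneg (hμ t) (hXnn t))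
    have hall : ∀ t ∈ (Finset.univ : Finset T), μ t * X t = 0 :=
      (Finset.sum_eq_zero_iff_of_nonneg
        (fun t _ => mul_nonneg (hμ t) (hXnn t))).mp hzero
    have hSzero : ∑ t ∈ Sᶜ, μ t = 0 := by
      refine Finset.sum_eq_zero fun t ht => ?_
      have hxt : 0 < X t := by
        have := hcompl t ht
        nlinarith [hμ t, hXnn t]
      have := hall t (Finset.mem_univ t)
      rcases mul_eq_zero.mp this with h1 | h2
      · exact h1
      · exact absurd h2 (ne_of_gt hxt)
    linarith
  · have hKO : 0 < K * OPT := mul_pos hKpos hpos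
    nlinarith [hlow, hexp, hS']
end

section
/- Let D : C → ℝ be a database over the reals with distance δ(x, y) = |x − y|, Γ a coincidence constraint over ℝ, w : A → ℝ nonnegative weights, and τ ≥ 0. For every (δ≤τ)-repair E of D there exists a (δ≤τ)-repair E# of D such that: (i) for every attribute a ∈ A, the multiset of values {E#(c) : λ(c) = a} equals the multiset {E(c) : λ(c) = a} (hence E# has the same coincidence profiles as E and satisfies Γ); (ii) κ(D, E#, δ) ≤ κ(D, E, δ); and (iii) E# is order-preserving on each label class: for all cells c, c' with λ(c) = λ(c') and D(c) < D(c'), it holds that E#(c) ≤ E#(c'). -/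
open Classical in
private lemma stmt8_cross (a b x y : ℝ) (hab : a < b) (hyx : y < x) :
    |a - y| + |b - x| ≤ |a - x| + |b - y| := by
  rcases abs_cases (a - y) with ⟨h1, h1'⟩ | ⟨h1, h1'⟩ <;>
  rcases abs_cases (b - x) with ⟨h2, h2'⟩ | ⟨h2, h2'⟩ <;>
  rcases abs_cases (a - x) with ⟨h3, h3'⟩ | ⟨h3, h3'⟩ <;>
  rcases abs_cases (b - y) with ⟨h4, h4'⟩ | ⟨h4, h4'⟩ <;> linarith

open Classical in
private lemma stmt8_tau (a b x y B : ℝ) (hab : a < b) (hyx : y < x)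
    (hx : |a - x| ≤ B) (hy : |b - y| ≤ B) : |a - y| ≤ B ∧ |b - x| ≤ B := by
  simp only [abs_le] at *
  exact ⟨⟨by linarith, by linarith⟩, by linarith, by linarith⟩

open Classical in
private lemma stmt8_lab_swap {C A : Type*} (lab : C → A) {c₀ c₁ : C}
    (h : lab c₀ = lab c₁) (c : C) : lab (Equiv.swap c₀ c₁ c) = lab c := by
  rcases eq_or_ne c c₀ with rfl | h0
  · rw [Equiv.swap_apply_left]; exact h.symm
  rcases eq_or_ne c c₁ with rfl | h1
  · rw [Equiv.swap_apply_right]; exact h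
  · rw [Equiv.swap_apply_of_ne_of_ne h0 h1]

open Classical in
private lemma stmt8_map_swap {C A : Type*} [Fintype C] (lab : C → A) {c₀ c₁ : C}
    (h : lab c₀ = lab c₁) (F : C → ℝ) (a : A) :
    (Finset.univ.filter fun c : C => lab c = a).val.map (F ∘ Equiv.swap c₀ c₁) =
      (Finset.univ.filter fun c : C => lab c = a).val.map F := by
  classical
  set s : Finset C := Finset.univ.filter fun c : C => lab c = a with hs
  have hinv : s.map (Equiv.swap c₀ c₁).toEmbedding = s := by
    ext c
    simp only [Finset.mem_map_equiv, Equiv.symm_swap, hs, Finset.mem_filter,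
      Finset.mem_univ, true_and]
    rw [stmt8_lab_swap lab h c]
  calc s.val.map (F ∘ Equiv.swap c₀ c₁)
      = (s.val.map (Equiv.swap c₀ c₁)).map F := by rw [Multiset.map_map]
    _ = (s.map (Equiv.swap c₀ c₁).toEmbedding).val.map F := by
          rw [Finset.map_val]; simp only [Equiv.coe_toEmbedding]
    _ = s.val.map F := by rw [hinv]

open Classical in
private lemma stmt8_ncard {C A : Type*} [Fintype C] (lab : C → A) (F E : C → ℝ) (a : A)
    (hm : (Finset.univ.filter fun c : C => lab c = a).val.map F =
      (Finset.univ.filter fun c : C => lab c = a).val.map E) (v : ℝ) :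
    {c : C | lab c = a ∧ F c = v}.ncard = {c : C | lab c = a ∧ E c = v}.ncard := by
  classical
  have key : ∀ G : C → ℝ, (Finset.univ.filter fun c : C => lab c = a ∧ G c = v).card
      = Multiset.count v ((Finset.univ.filter fun c : C => lab c = a).val.map G) := by
    intro G
    rw [Multiset.count_map, Finset.card_def, Finset.filter_val, Finset.filter_val,
      Multiset.filter_filter]
    congr 1
    apply Multiset.filter_congr
    intro c _
    exact ⟨fun h => ⟨h.2.symm, h.1⟩, fun h => ⟨h.2, h.1.symm⟩⟩
  have h1 : {c : C | lab c = a ∧ F c = v} =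
      ↑(Finset.univ.filter fun c : C => lab c = a ∧ F c = v) := by
    ext c; simp
  have h2 : {c : C | lab c = a ∧ E c = v} =
      ↑(Finset.univ.filter fun c : C => lab c = a ∧ E c = v) := by
    ext c; simp
  rw [h1, h2, Set.ncard_coe_finset, Set.ncard_coe_finset, key F, key E, hm]

open Classical in
private lemma stmt8_sum_two {C : Type*} [Fintype C] {c₀ c₁ : C} (h : c₀ ≠ c₁)
    (f g : C → ℝ) (hfg : ∀ c, c ≠ c₀ → c ≠ c₁ → f c = g c) :
    ∑ c : C, f c - ∑ c : C, g c = (f c₀ + f c₁) - (g c₀ + g c₁) := by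
  classical
  have hf := Finset.sum_add_sum_compl ({c₀, c₁} : Finset C) f
  have hg := Finset.sum_add_sum_compl ({c₀, c₁} : Finset C) g
  have hcompl : ∑ c ∈ ({c₀, c₁} : Finset C)ᶜ, f c = ∑ c ∈ ({c₀, c₁} : Finset C)ᶜ, g c := by
    apply Finset.sum_congr rfl
    intro c hc
    simp only [Finset.mem_compl, Finset.mem_insert, Finset.mem_singleton, not_or] at hc
    exact hfg c hc.1 hc.2
  rw [Finset.sum_pair h] at hf hg
  linarith

open Classical in
/-- On the line, every `(δ≤τ)`-repair `E` of `D : C → ℝ` can be turned into a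
`(δ≤τ)`-repair `E'` that uses, per attribute, the same multiset of values as `E`,
has cost at most that of `E`, and is order-preserving on each label class. -/
theorem stmt_8 {C A : Type*} [Fintype C]
    (lab : C → A) (w : A → ℝ) (hw : ∀ a, 0 ≤ w a)
    (Γ : ℝ → Set (A → ℕ)) (τ : ℝ) (hτ : 0 ≤ τ)
    (D : C → ℝ) (E : C → ℝ)
    (hEΓ : ∀ v : ℝ, (fun a => {c : C | lab c = a ∧ E c = v}.ncard) ∈ Γ v)
    (hEτ : ∀ c, |D c - E c| ≤ w (lab c) * τ) :
    ∃ E' : C → ℝ,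
      (∀ v : ℝ, (fun a => {c : C | lab c = a ∧ E' c = v}.ncard) ∈ Γ v) ∧
      (∀ c, |D c - E' c| ≤ w (lab c) * τ) ∧
      (∀ a : A, (Finset.univ.filter fun c : C => lab c = a).val.map E' =
        (Finset.univ.filter fun c : C => lab c = a).val.map E) ∧
      (∑ c : C, w (lab c) * |D c - E' c| ≤ ∑ c : C, w (lab c) * |D c - E c|) ∧
      (∀ c c' : C, lab c = lab c' → D c < D c' → E' c ≤ E' c') := by
  classical
  -- the finite set of candidate repairs: permutations of `E` satisfying all conditions
  set Q : (C → ℝ) → Prop := fun F =>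
    (∀ c, |D c - F c| ≤ w (lab c) * τ) ∧
    (∀ a : A, (Finset.univ.filter fun c : C => lab c = a).val.map F =
      (Finset.univ.filter fun c : C => lab c = a).val.map E) ∧
    (∑ c : C, w (lab c) * |D c - F c| ≤ ∑ c : C, w (lab c) * |D c - E c|) with hQ
  set 𝒯 : Finset (C → ℝ) :=
    (Finset.univ.image (fun σ : Equiv.Perm C => E ∘ σ)).filter Q with h𝒯
  have hE𝒯 : E ∈ 𝒯 := by
    rw [h𝒯, Finset.mem_filter]
    refine ⟨Finset.mem_image.2 ⟨Equiv.refl C, Finset.mem_univ _, by funext c; rfl⟩,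
      hEτ, fun a => rfl, le_refl _⟩
  obtain ⟨F, hF𝒯, hFmax⟩ :=
    (Finset.univ.image (fun σ : Equiv.Perm C => E ∘ σ)).filter Q
      |>.exists_max_image (fun F => ∑ c : C, D c * F c) ⟨E, hE𝒯⟩
  rw [Finset.mem_filter] at hF𝒯
  obtain ⟨hFS, hFτ, hFm, hFcost⟩ := hF𝒯
  -- key claim: F has no inversions
  have hkey : ∀ c c' : C, lab c = lab c' → D c < D c' → F c ≤ F c' := by
    intro c₀ c₁ hl hD
    by_contra hlt
    push_neg at hlt
    have hne : c₀ ≠ c₁ := fun h => absurd hD (by rw [h]; exact lt_irrefl _)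
    set G : C → ℝ := F ∘ Equiv.swap c₀ c₁ with hG
    have hG0 : G c₀ = F c₁ := by rw [hG]; simp [Equiv.swap_apply_left]
    have hG1 : G c₁ = F c₀ := by rw [hG]; simp [Equiv.swap_apply_right]
    have hGo : ∀ c, c ≠ c₀ → c ≠ c₁ → G c = F c := by
      intro c h0 h1; rw [hG]; simp [Equiv.swap_apply_of_ne_of_ne h0 h1]
    -- G is a permuted variant of E
    have hGS : G ∈ Finset.univ.image (fun σ : Equiv.Perm C => E ∘ σ) := by
      obtain ⟨σ, _, hσ⟩ := Finset.mem_image.1 hFS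
      refine Finset.mem_image.2 ⟨(Equiv.swap c₀ c₁).trans σ, Finset.mem_univ _, ?_⟩
      funext c
      rw [hG, ← hσ]
      rfl
    -- τ-bound for G
    have htau := stmt8_tau (D c₀) (D c₁) (F c₀) (F c₁) (w (lab c₀) * τ) hD hlt
      (hFτ c₀) (by rw [hl]; exact hFτ c₁)
    have hGτ : ∀ c, |D c - G c| ≤ w (lab c) * τ := by
      intro c
      rcases eq_or_ne c c₀ with rfl | h0
      · rw [hG0]; exact htau.1
      rcases eq_or_ne c c₁ with rfl | h1
      · rw [hG1, ← hl]; exact htau.2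
      · rw [hGo c h0 h1]; exact hFτ c
    -- cost of G is at most cost of F
    have hcost : ∑ c : C, w (lab c) * |D c - G c| ≤ ∑ c : C, w (lab c) * |D c - F c| := by
      have hdiff := stmt8_sum_two hne (fun c => w (lab c) * |D c - G c|)
        (fun c => w (lab c) * |D c - F c|)
        (fun c h0 h1 => by rw [hGo c h0 h1])
      have hcross := stmt8_cross (D c₀) (D c₁) (F c₀) (F c₁) hD hlt
      have hwnn := hw (lab c₀)
      have : w (lab c₀) * |D c₀ - G c₀| + w (lab c₁) * |D c₁ - G c₁|
          ≤ w (lab c₀) * |D c₀ - F c₀| + w (lab c₁) * |D c₁ - F c₁| := by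
        rw [hG0, hG1, ← hl]
        nlinarith [abs_nonneg (D c₀ - F c₁), abs_nonneg (D c₁ - F c₀)]
      linarith [hdiff]
    -- G satisfies Q
    have hGQ : Q G := by
      refine ⟨hGτ, fun a => ?_, le_trans hcost hFcost⟩
      rw [hG, stmt8_map_swap lab hl F a]
      exact hFm a
    -- but G has strictly larger potential, contradiction
    have hGmem : G ∈ 𝒯 := by rw [h𝒯, Finset.mem_filter]; exact ⟨hGS, hGQ⟩
    have hle := hFmax G hGmem
    have hdiff := stmt8_sum_two hne (fun c => D c * G c) (fun c => D c * F c)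
      (fun c h0 h1 => by rw [hGo c h0 h1])
    rw [hG0, hG1] at hdiff
    nlinarith [hdiff, hle, mul_pos (sub_pos.2 hD) (sub_pos.2 hlt)]
  refine ⟨F, ?_, hFτ, hFm, hFcost, hkey⟩
  intro v
  have : (fun a => {c : C | lab c = a ∧ F c = v}.ncard)
      = (fun a => {c : C | lab c = a ∧ E c = v}.ncard) := by
    funext a
    exact stmt8_ncard lab F E a (hFm a) v
  rw [this]
  exact hEΓ v
end

section
/- Let I be a finite index set partitioned into disjoint sets L and R, let a_i (i ∈ I) and v, v' be real numbers, and let w_i ≥ 0 for all i ∈ I. Assume v' ≤ v, a_i ≤ v' for every i ∈ L, a_i ≥ v for every i ∈ R, and ∑_{i∈R} w_i ≤ ∑_{i∈L} w_i. Then ∑_{i∈I} w_i·|a_i − v'| ≤ ∑_{i∈I} w_i·|a_i − v|. (Moving a group of co-located cells toward the heavier side of their weighted median does not increase total weighted movement cost.) -/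
/-- Moving a group of co-located cells toward the heavier side of their weighted median
does not increase total weighted movement cost: with `I = L ∪ R` disjoint, `v' ≤ v`,
`a i ≤ v'` on `L`, `a i ≥ v` on `R`, and `∑_R w ≤ ∑_L w`, we get
`∑_I w i·|a i − v'| ≤ ∑_I w i·|a i − v|`. -/
theorem stmt_9 {ι : Type*} [DecidableEq ι] (I L R : Finset ι)
    (hdisj : Disjoint L R) (hpart : L ∪ R = I)
    (a : ι → ℝ) (w : ι → ℝ) (hw : ∀ i ∈ I, 0 ≤ w i)
    (v v' : ℝ) (hvv : v' ≤ v)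
    (hL : ∀ i ∈ L, a i ≤ v') (hR : ∀ i ∈ R, v ≤ a i)
    (hwt : ∑ i ∈ R, w i ≤ ∑ i ∈ L, w i) :
    ∑ i ∈ I, w i * |a i - v'| ≤ ∑ i ∈ I, w i * |a i - v| := by
  subst hpart
  rw [Finset.sum_union hdisj, Finset.sum_union hdisj]
  have hwL : ∀ i ∈ L, 0 ≤ w i := fun i hi => hw i (Finset.mem_union_left _ hi)
  have hwR : ∀ i ∈ R, 0 ≤ w i := fun i hi => hw i (Finset.mem_union_right _ hi)
  have e1 : ∀ i ∈ L, w i * |a i - v'| = w i * (v' - a i) := by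
    intro i hi
    rw [abs_of_nonpos (by linarith [hL i hi])]; ring
  have e2 : ∀ i ∈ L, w i * |a i - v| = w i * (v - a i) := by
    intro i hi
    rw [abs_of_nonpos (by linarith [hL i hi])]; ring
  have e3 : ∀ i ∈ R, w i * |a i - v'| = w i * (a i - v') := by
    intro i hi
    rw [abs_of_nonneg (by linarith [hR i hi])]
  have e4 : ∀ i ∈ R, w i * |a i - v| = w i * (a i - v) := by
    intro i hi
    rw [abs_of_nonneg (by linarith [hR i hi])]
  rw [Finset.sum_congr rfl e1, Finset.sum_congr rfl e2,
      Finset.sum_congr rfl e3, Finset.sum_congr rfl e4]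
  have key : ∀ (u : ℝ) (S : Finset ι),
      ∑ i ∈ S, w i * (u - a i) = u * ∑ i ∈ S, w i - ∑ i ∈ S, w i * a i := by
    intro u S
    rw [Finset.mul_sum, ← Finset.sum_sub_distrib]
    exact Finset.sum_congr rfl fun i _ => by ring
  have key2 : ∀ (u : ℝ) (S : Finset ι),
      ∑ i ∈ S, w i * (a i - u) = ∑ i ∈ S, w i * a i - u * ∑ i ∈ S, w i := by
    intro u S
    rw [Finset.mul_sum, ← Finset.sum_sub_distrib]
    exact Finset.sum_congr rfl fun i _ => by ring
  rw [key v' L, key v L, key2 v' R, key2 v R]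
  nlinarith [hwt, hvv]
end

section
/- Let M ⊆ ℝ be a finite set with δ(x, y) = |x − y|, let Γ be a coincidence constraint over M such that for every v ∈ M the set Γ(v) contains the zero profile and is closed under pointwise addition, let w : A → ℝ be nonnegative weights, τ ≥ 0, and let D : C → M be a database with C nonempty. If D has a (δ≤τ)-repair, then there exist an optimal (δ≤τ)-repair E of D (one of minimum cost among all (δ≤τ)-repairs of D) and a strict prefix C' ⊊ C of D such that: (i) the restriction of E to C' is an optimal (δ≤τ)-repair of the restricted database D|C'; and (ii) E is constant on C ∖ C'. -/
/-- `E` is a `(δ≤τ)`-repair of the restriction of `D` to the cell set `S`: on `S` it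
takes values in `M`, its coincidence profiles (counted over `S`) are allowed by `Γ`,
and every cell of `S` moves by at most `w(λ(c))·τ`. -/
def IsTauRepairOn {C A : Type*} (S : Set C) (lab : C → A) (w : A → ℝ)
    (M : Set ℝ) (Γ : ℝ → Set (A → ℕ)) (τ : ℝ) (D E : C → ℝ) : Prop :=
  (∀ c ∈ S, E c ∈ M) ∧
  (∀ v ∈ M, (fun a => {c : C | c ∈ S ∧ lab c = a ∧ E c = v}.ncard) ∈ Γ v) ∧
  (∀ c ∈ S, |D c - E c| ≤ w (lab c) * τ)

/-- Cost of `E` relative to `D`, restricted to the cell set `S`. -/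
noncomputable def costOn {C A : Type*} [Fintype C] (S : Set C)
    (lab : C → A) (w : A → ℝ) (D E : C → ℝ) : ℝ :=
  ∑ c : C, S.indicator (fun c => w (lab c) * |D c - E c|) c

/-- Rearrangement inequality for absolute values on the line. -/
lemma rearr_aux {a b x y : ℝ} (hab : a ≤ b) (hxy : x ≤ y) :
    |a - x| + |b - y| ≤ |a - y| + |b - x| := by
  rcases abs_cases (a - x) with ⟨e1, h1⟩ | ⟨e1, h1⟩ <;>
  rcases abs_cases (b - y) with ⟨e2, h2⟩ | ⟨e2, h2⟩ <;>
  rcases abs_cases (a - y) with ⟨e3, h3⟩ | ⟨e3, h3⟩ <;>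
  rcases abs_cases (b - x) with ⟨e4, h4⟩ | ⟨e4, h4⟩ <;>
  linarith

/-- Split a universal sum into two distinguished points plus the rest. -/
lemma sum_split_two {C : Type*} [Fintype C] [DecidableEq C] (f : C → ℝ) {c c' : C}
    (h : c ≠ c') :
    ∑ x, f x = f c + f c' + ∑ x ∈ (Finset.univ.erase c).erase c', f x := by
  have hc' : c' ∈ Finset.univ.erase c :=
    Finset.mem_erase.2 ⟨Ne.symm h, Finset.mem_univ _⟩
  rw [← Finset.add_sum_erase _ f (Finset.mem_univ c),
      ← Finset.add_sum_erase _ f hc', add_assoc]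

/-- For a finite line metric `M ⊆ ℝ` and a coincidence constraint `Γ` whose value sets
contain the zero profile and are closed under addition: if any `(δ≤τ)`-repair of `D`
exists, then there are an optimal `(δ≤τ)`-repair `E` of `D` and a strict prefix `C'` of
the cells such that `E` restricted to `C'` is an optimal `(δ≤τ)`-repair of `D|C'` and
`E` is constant on the complement of `C'`. -/
theorem stmt_10 {C A : Type*} [Fintype C] [Nonempty C]
    (M : Set ℝ) (hMfin : M.Finite)
    (lab : C → A) (w : A → ℝ) (hw : ∀ a, 0 ≤ w a)
    (Γ : ℝ → Set (A → ℕ))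
    (hzero : ∀ v ∈ M, (fun _ => 0) ∈ Γ v)
    (hadd : ∀ v ∈ M, ∀ p q : A → ℕ, p ∈ Γ v → q ∈ Γ v →
      (fun a => p a + q a) ∈ Γ v)
    (τ : ℝ) (hτ : 0 ≤ τ)
    (D : C → ℝ) (hD : ∀ c, D c ∈ M)
    (hex : ∃ E : C → ℝ, IsTauRepairOn Set.univ lab w M Γ τ D E) :
    ∃ (E : C → ℝ) (C' : Set C),
      IsTauRepairOn Set.univ lab w M Γ τ D E ∧
      (∀ E' : C → ℝ, IsTauRepairOn Set.univ lab w M Γ τ D E' →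
        costOn Set.univ lab w D E ≤ costOn Set.univ lab w D E') ∧
      (∀ c c' : C, lab c = lab c' → c' ∈ C' → D c < D c' → c ∈ C') ∧
      C' ≠ Set.univ ∧
      IsTauRepairOn C' lab w M Γ τ D E ∧
      (∀ E' : C → ℝ, IsTauRepairOn C' lab w M Γ τ D E' →
        costOn C' lab w D E ≤ costOn C' lab w D E') ∧
      (∀ c c' : C, c ∉ C' → c' ∉ C' → E c = E c') := by
  classical
  set R : Set (C → ℝ) := {E | IsTauRepairOn Set.univ lab w M Γ τ D E} with hRdef
  have hRfin : R.Finite := by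
    apply Set.Finite.subset (Set.Finite.pi (fun _ : C => hMfin))
    intro E hE
    simp only [Set.mem_univ_pi]
    exact fun c => hE.1 c (Set.mem_univ c)
  have hRne : R.Nonempty := hex
  obtain ⟨E₁, hE₁R, hE₁min⟩ :=
    Set.exists_min_image R (costOn Set.univ lab w D) hRfin hRne
  set R2 : Set (C → ℝ) :=
    {F ∈ R | costOn Set.univ lab w D F ≤ costOn Set.univ lab w D E₁} with hR2def
  have hR2fin : R2.Finite := hRfin.subset (Set.sep_subset _ _)
  obtain ⟨E, hER2, hEmax⟩ :=
    Set.exists_max_image R2 (fun F => ∑ c, D c * F c) hR2fin ⟨E₁, hE₁R, le_refl _⟩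
  obtain ⟨hER, hEcost⟩ := hER2
  have hopt : ∀ E', IsTauRepairOn Set.univ lab w M Γ τ D E' →
      costOn Set.univ lab w D E ≤ costOn Set.univ lab w D E' :=
    fun E' h => hEcost.trans (hE₁min E' h)
  -- E is monotone within label classes
  have hmono : ∀ c c', lab c = lab c' → D c < D c' → E c ≤ E c' := by
    intro c c' hl hDlt
    by_contra hlt
    push_neg at hlt
    have hne : c ≠ c' := fun h => by rw [h] at hDlt; exact lt_irrefl _ hDlt
    set σ := Equiv.swap c c' with hσ
    set F : C → ℝ := fun x => E (σ x) with hF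
    have hFc : F c = E c' := by simp [hF, hσ]
    have hFc' : F c' = E c := by simp [hF, hσ]
    have hFoff : ∀ x, x ≠ c → x ≠ c' → F x = E x := by
      intro x h1 h2; simp [hF, hσ, Equiv.swap_apply_of_ne_of_ne h1 h2]
    have hlabσ : ∀ x, lab (σ x) = lab x := by
      intro x
      rcases eq_or_ne x c with rfl | h1
      · simp [hσ, hl]
      rcases eq_or_ne x c' with rfl | h2
      · simp [hσ, hl]
      · simp [hσ, Equiv.swap_apply_of_ne_of_ne h1 h2]
    obtain ⟨h1, h2, h3⟩ := hER
    have hFrep : IsTauRepairOn Set.univ lab w M Γ τ D F := by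
      refine ⟨fun x _ => h1 (σ x) (Set.mem_univ _), ?_, ?_⟩
      · intro v hv
        have hprof : (fun a => {x : C | x ∈ Set.univ ∧ lab x = a ∧ F x = v}.ncard)
            = fun a => {x : C | x ∈ Set.univ ∧ lab x = a ∧ E x = v}.ncard := by
          funext a
          have hset : {x : C | x ∈ Set.univ ∧ lab x = a ∧ F x = v}
              = ⇑σ ⁻¹' {x : C | x ∈ Set.univ ∧ lab x = a ∧ E x = v} := by
            ext x
            simp [hF, hlabσ x]
          rw [hset, ← Equiv.image_symm_eq_preimage,
            Set.ncard_image_of_injective _ (Equiv.injective _)]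
        rw [hprof]
        exact h2 v hv
      · intro x _
        have hKc : |D c - E c| ≤ w (lab c) * τ := h3 c (Set.mem_univ c)
        have hKc' : |D c' - E c'| ≤ w (lab c) * τ := by
          rw [hl]; exact h3 c' (Set.mem_univ c')
        rw [abs_le] at hKc hKc'
        rcases eq_or_ne x c with rfl | hx1
        · rw [hFc, abs_le]; constructor <;> linarith
        rcases eq_or_ne x c' with rfl | hx2
        · rw [hFc', abs_le, ← hl]; constructor <;> linarith
        · rw [hFoff x hx1 hx2]; exact h3 x (Set.mem_univ x)
    -- cost of F is not larger
    have hcostF : costOn Set.univ lab w D F ≤ costOn Set.univ lab w D E := by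
      simp only [costOn, Set.indicator_univ]
      rw [sum_split_two (fun x => w (lab x) * |D x - F x|) hne,
          sum_split_two (fun x => w (lab x) * |D x - E x|) hne]
      have htail : ∑ x ∈ (Finset.univ.erase c).erase c', w (lab x) * |D x - F x|
          = ∑ x ∈ (Finset.univ.erase c).erase c', w (lab x) * |D x - E x| := by
        refine Finset.sum_congr rfl fun x hx => ?_
        simp only [Finset.mem_erase] at hx
        rw [hFoff x hx.2.1 hx.1]
      rw [htail, hFc, hFc', ← hl]
      have := rearr_aux (le_of_lt hDlt) (le_of_lt hlt)
      nlinarith [hw (lab c)]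
    have hFR2 : F ∈ R2 := ⟨hFrep, hcostF.trans hEcost⟩
    have hgle := hEmax F hFR2
    rw [sum_split_two (fun x => D x * F x) hne,
        sum_split_two (fun x => D x * E x) hne] at hgle
    have htail : ∑ x ∈ (Finset.univ.erase c).erase c', D x * F x
        = ∑ x ∈ (Finset.univ.erase c).erase c', D x * E x := by
      refine Finset.sum_congr rfl fun x hx => ?_
      simp only [Finset.mem_erase] at hx
      rw [hFoff x hx.2.1 hx.1]
    rw [htail, hFc, hFc'] at hgle
    nlinarith
  -- the maximal value of E
  obtain ⟨c₀, -, hc₀⟩ :=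
    Finset.exists_max_image Finset.univ E ⟨Classical.arbitrary C, Finset.mem_univ _⟩
  set v : ℝ := E c₀ with hv
  have hvM : v ∈ M := hER.1 c₀ (Set.mem_univ c₀)
  set C' : Set C := {x | E x ≠ v} with hC'
  have hcompl : ∀ x, x ∉ C' ↔ E x = v := by
    intro x; simp [hC']
  refine ⟨E, C', hER, hopt, ?_, ?_, ?_, ?_, ?_⟩
  · -- prefix
    intro c c' hl hc'C' hlt
    have h1 : E c ≤ E c' := hmono c c' hl hlt
    have h2 : E c' < v := lt_of_le_of_ne (hc₀ c' (Finset.mem_univ _)) hc'C'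
    exact ne_of_lt (lt_of_le_of_lt h1 h2)
  · -- strict
    intro h
    have : c₀ ∈ C' := h ▸ Set.mem_univ c₀
    exact this rfl
  · -- E is a repair on C'
    obtain ⟨h1, h2, h3⟩ := hER
    refine ⟨fun x _ => h1 x (Set.mem_univ x), ?_, fun x _ => h3 x (Set.mem_univ x)⟩
    intro u hu
    by_cases huv : u = v
    · have hprof : (fun a => {x : C | x ∈ C' ∧ lab x = a ∧ E x = u}.ncard)
          = fun _ => (0 : ℕ) := by
        funext a
        have : {x : C | x ∈ C' ∧ lab x = a ∧ E x = u} = ∅ := by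
          ext x; simp only [Set.mem_setOf_eq, Set.mem_empty_iff_false, iff_false]
          rintro ⟨hx, -, hx2⟩; exact hx (hx2.trans huv)
        rw [this, Set.ncard_empty]
      rw [hprof]; exact hzero u hu
    · have hprof : (fun a => {x : C | x ∈ C' ∧ lab x = a ∧ E x = u}.ncard)
          = fun a => {x : C | x ∈ Set.univ ∧ lab x = a ∧ E x = u}.ncard := by
        funext a
        congr 1
        ext x
        simp only [Set.mem_setOf_eq, Set.mem_univ, true_and]
        constructor
        · rintro ⟨-, h⟩; exact h
        · rintro ⟨ha, hb⟩; exact ⟨fun h => huv (hb.symm.trans h), ha, hb⟩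
      rw [hprof]; exact h2 u hu
  · -- optimality on C'
    intro E'' hE''
    set F : C → ℝ := fun x => if x ∈ C' then E'' x else E x with hF
    have hFin : ∀ x ∈ C', F x = E'' x := fun x hx => by simp [hF, hx]
    have hFout : ∀ x, x ∉ C' → F x = E x := fun x hx => by simp [hF, hx]
    obtain ⟨hE1, hE2, hE3⟩ := hER
    obtain ⟨h1, h2, h3⟩ := hE''
    have hFrep : IsTauRepairOn Set.univ lab w M Γ τ D F := by
      refine ⟨?_, ?_, ?_⟩
      · intro x _
        by_cases hx : x ∈ C'
        · rw [hFin x hx]; exact h1 x hx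
        · rw [hFout x hx]; exact hE1 x (Set.mem_univ x)
      · intro u hu
        by_cases huv : u = v
        · have hprof : ∀ a, {x : C | x ∈ Set.univ ∧ lab x = a ∧ F x = u}
              = {x : C | x ∈ C' ∧ lab x = a ∧ E'' x = u}
                ∪ {x : C | x ∈ Set.univ ∧ lab x = a ∧ E x = u} := by
            intro a
            ext x
            by_cases hx : x ∈ C'
            · have hxne : E x ≠ u := by rw [huv]; exact hx
              simp only [Set.mem_union, Set.mem_setOf_eq, Set.mem_univ, true_and,
                hFin x hx]
              tauto
            · have hxe : E x = u := by rw [huv]; exact (hcompl x).1 hx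
              simp only [Set.mem_union, Set.mem_setOf_eq, Set.mem_univ, true_and,
                hFout x hx]
              tauto
          have hdisj : ∀ a, Disjoint {x : C | x ∈ C' ∧ lab x = a ∧ E'' x = u}
              {x : C | x ∈ Set.univ ∧ lab x = a ∧ E x = u} := by
            intro a
            rw [Set.disjoint_left]
            rintro x ⟨hx, -, -⟩ ⟨-, -, hb⟩
            exact hx (hb.trans huv)
          have hprofn : (fun a => {x : C | x ∈ Set.univ ∧ lab x = a ∧ F x = u}.ncard)
              = fun a => {x : C | x ∈ C' ∧ lab x = a ∧ E'' x = u}.ncard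
                + {x : C | x ∈ Set.univ ∧ lab x = a ∧ E x = u}.ncard := by
            funext a
            rw [hprof a, Set.ncard_union_eq (hdisj a) (Set.toFinite _) (Set.toFinite _)]
          rw [hprofn]
          exact hadd u hu _ _ (h2 u hu) (hE2 u hu)
        · have hprof : (fun a => {x : C | x ∈ Set.univ ∧ lab x = a ∧ F x = u}.ncard)
              = fun a => {x : C | x ∈ C' ∧ lab x = a ∧ E'' x = u}.ncard := by
            funext a
            congr 1
            ext x
            by_cases hx : x ∈ C'
            · simp only [Set.mem_setOf_eq, Set.mem_univ, true_and, hFin x hx]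
              tauto
            · have hxe : E x = v := (hcompl x).1 hx
              have hFne : F x ≠ u := by
                rw [hFout x hx, hxe]; exact fun h => huv h.symm
              simp only [Set.mem_setOf_eq, Set.mem_univ, true_and]
              tauto
          rw [hprof]
          exact h2 u hu
      · intro x _
        by_cases hx : x ∈ C'
        · rw [hFin x hx]; exact h3 x hx
        · rw [hFout x hx]; exact hE3 x (Set.mem_univ x)
    have hle := hopt F hFrep
    have key : costOn Set.univ lab w D E - costOn Set.univ lab w D F
        = costOn C' lab w D E - costOn C' lab w D E'' := by
      simp only [costOn, Set.indicator_univ]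
      rw [← Finset.sum_sub_distrib, ← Finset.sum_sub_distrib]
      refine Finset.sum_congr rfl fun x _ => ?_
      by_cases hx : x ∈ C'
      · rw [hFin x hx, Set.indicator_of_mem hx, Set.indicator_of_mem hx]
      · rw [hFout x hx, Set.indicator_of_notMem hx, Set.indicator_of_notMem hx,
          sub_self, sub_self]
    linarith
  · -- constancy on the complement
    intro c c' hc hc'
    rw [(hcompl c).1 hc, (hcompl c').1 hc']
end

section
/- Let M = ℝ with δ(x, y) = |x − y|, let Γ be a uniform coincidence constraint containing the zero profile and closed under pointwise addition, let w : A → ℝ be nonnegative weights, τ ≥ 0, and let D : C → ℝ be a database. If D has a (δ≤τ)-repair, then there exists an optimal (δ≤τ)-repair E of D (one of minimum cost among all (δ≤τ)-repairs) whose values all lie in the finite set Vals(D) ∪ { v + w(a)·τ : v ∈ Vals(D), a ∈ A } ∪ { v − w(a)·τ : v ∈ Vals(D), a ∈ A }, where Vals(D) = { D(c) : c ∈ C }. -/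
open Finset

private lemma gamma_sum {A : Type*} (Γ : Set (A → ℕ))
    (hzero : (fun _ => 0) ∈ Γ)
    (hadd : ∀ p q : A → ℕ, p ∈ Γ → q ∈ Γ → (fun a => p a + q a) ∈ Γ)
    {ι : Type*} [DecidableEq ι] (t : Finset ι) (f : ι → A → ℕ) (hf : ∀ i ∈ t, f i ∈ Γ) :
    (fun a => ∑ i ∈ t, f i a) ∈ Γ := by
  induction t using Finset.induction with
  | empty => simpa using hzero
  | insert x s hx ih =>
      have h1 : f x ∈ Γ := hf x (mem_insert_self x s)
      have h2 : (fun a => ∑ i ∈ s, f i a) ∈ Γ := ih (fun i hi => hf i (mem_insert_of_mem hi))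
      have := hadd _ _ h1 h2
      simpa [Finset.sum_insert hx] using this

private lemma abs_interp {l r v t z : ℝ} (hv : v = (1-t)*l + t*r)
    (ht0 : 0 ≤ t) (ht1 : t ≤ 1) (hlr : l ≤ r) (hz : z ≤ l ∨ r ≤ z) :
    |z - v| = (1-t)*|z - l| + t*|z - r| := by
  have hlv : l ≤ v := by nlinarith
  have hvr : v ≤ r := by nlinarith
  rcases hz with h | h
  · rw [abs_of_nonpos (by linarith), abs_of_nonpos (by linarith),
      abs_of_nonpos (by linarith)]
    linear_combination hv
  · rw [abs_of_nonneg (by linarith), abs_of_nonneg (by linarith),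
      abs_of_nonneg (by linarith)]
    linear_combination -hv

private def GoodVal {C A : Type*} (D : C → ℝ) (w : A → ℝ) (τ : ℝ) (x : ℝ) : Prop :=
  (∃ c', x = D c') ∨ (∃ c' a, x = D c' + w a * τ) ∨ (∃ c' a, x = D c' - w a * τ)

private lemma fiber_opt {C A : Type*} [Fintype C] [DecidableEq C]
    (lab : C → A) (w : A → ℝ) (τ : ℝ)
    (D E : C → ℝ) (hE : ∀ c, |D c - E c| ≤ w (lab c) * τ)
    (v : ℝ) (hne : ∃ c, E c = v) :
    ∃ x : ℝ, GoodVal D w τ x ∧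
      (∀ c, E c = v → |D c - x| ≤ w (lab c) * τ) ∧
      (∑ c ∈ univ.filter (fun c => E c = v), w (lab c) * |D c - x|
        ≤ ∑ c ∈ univ.filter (fun c => E c = v), w (lab c) * |D c - v|) := by
  classical
  obtain ⟨c0, hc0⟩ := hne
  set V : Finset C := univ.filter (fun c => E c = v) with hV
  have hc0V : c0 ∈ V := by simp [hV, hc0]
  set T : Finset ℝ := V.image D ∪ V.image (fun c => D c - w (lab c) * τ)
      ∪ V.image (fun c => D c + w (lab c) * τ) with hT
  have hmem : ∀ c ∈ V, D c - w (lab c) * τ ≤ v ∧ v ≤ D c + w (lab c) * τ := by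
    intro c hc
    have hcv : E c = v := by simpa [hV] using hc
    have h := abs_le.1 (hE c)
    rw [hcv] at h
    exact ⟨by linarith [h.2], by linarith [h.1]⟩
  -- T membership shapes
  have hTgood : ∀ x ∈ T, GoodVal D w τ x := by
    intro x hx
    simp only [hT, mem_union, mem_image] at hx
    rcases hx with (⟨c, _, rfl⟩ | ⟨c, _, rfl⟩) | ⟨c, _, rfl⟩
    · exact Or.inl ⟨c, rfl⟩
    · exact Or.inr (Or.inr ⟨c, lab c, rfl⟩)
    · exact Or.inr (Or.inl ⟨c, lab c, rfl⟩)
  set Tle := T.filter (· ≤ v) with hTle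
  set Tge := T.filter (v ≤ ·) with hTge
  have hTleN : Tle.Nonempty := by
    refine ⟨D c0 - w (lab c0) * τ, ?_⟩
    simp only [hTle, mem_filter]
    exact ⟨by simp only [hT, mem_union, mem_image]; exact Or.inl (Or.inr ⟨c0, hc0V, rfl⟩),
      (hmem c0 hc0V).1⟩
  have hTgeN : Tge.Nonempty := by
    refine ⟨D c0 + w (lab c0) * τ, ?_⟩
    simp only [hTge, mem_filter]
    exact ⟨by simp only [hT, mem_union, mem_image]; exact Or.inr ⟨c0, hc0V, rfl⟩,
      (hmem c0 hc0V).2⟩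
  set l := Tle.max' hTleN with hl
  set r := Tge.min' hTgeN with hr
  have hlT : l ∈ T ∧ l ≤ v := by
    have := Tle.max'_mem hTleN
    simp only [hTle, mem_filter] at this; exact this
  have hrT : r ∈ T ∧ v ≤ r := by
    have := Tge.min'_mem hTgeN
    simp only [hTge, mem_filter] at this; exact this
  -- key bounds for each c in V
  have hlb : ∀ c ∈ V, D c - w (lab c) * τ ≤ l := by
    intro c hc
    apply Tle.le_max' _
    simp only [hTle, mem_filter]
    exact ⟨by simp only [hT, mem_union, mem_image]; exact Or.inl (Or.inr ⟨c, hc, rfl⟩),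
      (hmem c hc).1⟩
  have hrb : ∀ c ∈ V, r ≤ D c + w (lab c) * τ := by
    intro c hc
    apply Tge.min'_le _
    simp only [hTge, mem_filter]
    exact ⟨by simp only [hT, mem_union, mem_image]; exact Or.inr ⟨c, hc, rfl⟩,
      (hmem c hc).2⟩
  have habs : ∀ x : ℝ, l ≤ x → x ≤ r → ∀ c ∈ V, |D c - x| ≤ w (lab c) * τ := by
    intro x hx1 hx2 c hc
    rw [abs_le]
    constructor
    · have := hrb c hc; linarith
    · have := hlb c hc; linarith
  have hbrk : ∀ c ∈ V, D c ≤ l ∨ r ≤ D c := by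
    intro c hc
    have hDT : D c ∈ T := by
      simp only [hT, mem_union, mem_image]; exact Or.inl (Or.inl ⟨c, hc, rfl⟩)
    rcases le_total (D c) v with h | h
    · exact Or.inl (Tle.le_max' _ (by simp only [hTle, mem_filter]; exact ⟨hDT, h⟩))
    · exact Or.inr (Tge.min'_le _ (by simp only [hTge, mem_filter]; exact ⟨hDT, h⟩))
  rcases eq_or_lt_of_le (le_trans hlT.2 hrT.2) with heq | hlr
  · -- l = r, hence v = l
    have hvl : v = l := le_antisymm (heq ▸ hrT.2) hlT.2
    refine ⟨l, hTgood l hlT.1, ?_, ?_⟩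
    · intro c hc
      exact habs l le_rfl (le_of_eq heq) c (by simp [hV, hc])
    · rw [← hvl]
  · -- l < r
    set t := (v - l) / (r - l) with ht
    have hrl : (0:ℝ) < r - l := by linarith
    have ht0 : 0 ≤ t := div_nonneg (by linarith [hlT.2]) (le_of_lt hrl)
    have ht1 : t ≤ 1 := by
      rw [ht, div_le_one hrl]; linarith [hrT.2]
    have hv : v = (1-t)*l + t*r := by
      have : t * (r - l) = v - l := div_mul_cancel₀ _ (ne_of_gt hrl)
      linarith [this]
    have hsum : ∑ c ∈ V, w (lab c) * |D c - v|
        = (1-t) * (∑ c ∈ V, w (lab c) * |D c - l|) + t * (∑ c ∈ V, w (lab c) * |D c - r|) := by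
      rw [Finset.mul_sum, Finset.mul_sum, ← Finset.sum_add_distrib]
      apply Finset.sum_congr rfl
      intro c hc
      rw [abs_interp hv ht0 ht1 (le_of_lt hlr) (hbrk c hc)]
      ring
    rcases le_total (∑ c ∈ V, w (lab c) * |D c - l|) (∑ c ∈ V, w (lab c) * |D c - r|) with h | h
    · refine ⟨l, hTgood l hlT.1, fun c hc => habs l le_rfl (le_of_lt hlr) c (by simp [hV, hc]), ?_⟩
      rw [hsum]; nlinarith
    · refine ⟨r, hTgood r hrT.1, fun c hc => habs r (le_of_lt hlr) le_rfl c (by simp [hV, hc]), ?_⟩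
      rw [hsum]; nlinarith
private lemma transform {C A : Type*} [Fintype C] [DecidableEq C]
    (lab : C → A) (w : A → ℝ) (τ : ℝ) (Γ : Set (A → ℕ))
    (hzero : (fun _ => 0) ∈ Γ)
    (hadd : ∀ p q : A → ℕ, p ∈ Γ → q ∈ Γ → (fun a => p a + q a) ∈ Γ)
    (D E : C → ℝ)
    (hΓ : ∀ v : ℝ, (fun a => {c : C | lab c = a ∧ E c = v}.ncard) ∈ Γ)
    (hE : ∀ c, |D c - E c| ≤ w (lab c) * τ) :
    ∃ E₂ : C → ℝ,
      (∀ c, GoodVal D w τ (E₂ c)) ∧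
      (∀ v : ℝ, (fun a => {c : C | lab c = a ∧ E₂ c = v}.ncard) ∈ Γ) ∧
      (∀ c, |D c - E₂ c| ≤ w (lab c) * τ) ∧
      ∑ c : C, w (lab c) * |D c - E₂ c| ≤ ∑ c : C, w (lab c) * |D c - E c| := by
  classical
  set σ : ℝ → ℝ := fun v => if h : ∃ c, E c = v then (fiber_opt lab w τ D E hE v h).choose else v
    with hσ
  have hspec : ∀ v : ℝ, (∃ c, E c = v) → GoodVal D w τ (σ v) ∧
      (∀ c, E c = v → |D c - σ v| ≤ w (lab c) * τ) ∧
      (∑ c ∈ univ.filter (fun c => E c = v), w (lab c) * |D c - σ v|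
        ≤ ∑ c ∈ univ.filter (fun c => E c = v), w (lab c) * |D c - v|) := by
    intro v h
    have : σ v = (fiber_opt lab w τ D E hE v h).choose := by rw [hσ]; exact dif_pos h
    rw [this]
    exact (fiber_opt lab w τ D E hE v h).choose_spec
  refine ⟨fun c => σ (E c), ?_, ?_, ?_, ?_⟩
  · intro c
    exact (hspec (E c) ⟨c, rfl⟩).1
  · -- Γ constraint
    intro u
    set B : Finset ℝ := (univ.image E).filter (fun v => σ v = u) with hB
    have key : ∀ a : A, {c : C | lab c = a ∧ σ (E c) = u}.ncard
        = ∑ v ∈ B, {c : C | lab c = a ∧ E c = v}.ncard := by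
      intro a
      have e1 : {c : C | lab c = a ∧ σ (E c) = u}
          = ↑(univ.filter (fun c => lab c = a ∧ σ (E c) = u)) := by ext c; simp
      have e2 : ∀ v : ℝ, {c : C | lab c = a ∧ E c = v}
          = ↑(univ.filter (fun c => lab c = a ∧ E c = v)) := by intro v; ext c; simp
      have e3 : ∀ v : ℝ, {c : C | lab c = a ∧ E c = v}.ncard
          = (univ.filter (fun c => lab c = a ∧ E c = v)).card := fun v => by
        rw [e2 v, Set.ncard_coe_finset]
      rw [e1, Set.ncard_coe_finset]
      simp only [e3]
      set s := univ.filter (fun c => lab c = a ∧ σ (E c) = u) with hs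
      have hmaps : ∀ c ∈ s, E c ∈ B := by
        intro c hc
        simp only [hs, mem_filter, mem_univ, true_and] at hc
        simp only [hB, mem_filter, mem_image, mem_univ, true_and]
        exact ⟨⟨c, rfl⟩, hc.2⟩
      have := Finset.sum_fiberwise_of_maps_to hmaps (fun _ => (1 : ℕ))
      rw [Finset.card_eq_sum_ones s, ← this]
      apply Finset.sum_congr rfl
      intro v hv
      have hvu : σ v = u := by simp only [hB, mem_filter] at hv; exact hv.2
      rw [Finset.card_eq_sum_ones]
      apply Finset.sum_congr _ (fun _ _ => rfl)
      ext c
      simp only [hs, mem_filter, mem_univ, true_and]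
      constructor
      · rintro ⟨⟨h1, h2⟩, h3⟩; exact ⟨h1, h3⟩
      · rintro ⟨h1, h3⟩; exact ⟨⟨h1, h3 ▸ hvu⟩, h3⟩
    have : (fun a => {c : C | lab c = a ∧ σ (E c) = u}.ncard)
        = (fun a => ∑ v ∈ B, {c : C | lab c = a ∧ E c = v}.ncard) := funext key
    rw [this]
    exact gamma_sum Γ hzero hadd B _ (fun v _ => hΓ v)
  · intro c
    exact (hspec (E c) ⟨c, rfl⟩).2.1 c rfl
  · -- cost
    have hmaps : ∀ c ∈ (univ : Finset C), E c ∈ univ.image E := fun c _ => mem_image_of_mem E (mem_univ c)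
    rw [← Finset.sum_fiberwise_of_maps_to hmaps (fun c => w (lab c) * |D c - σ (E c)|),
        ← Finset.sum_fiberwise_of_maps_to hmaps (fun c => w (lab c) * |D c - E c|)]
    apply Finset.sum_le_sum
    intro v hv
    obtain ⟨c1, -, hc1⟩ := Finset.mem_image.1 hv
    have h1 : ∀ c ∈ univ.filter (fun c => E c = v), σ (E c) = σ v := by
      intro c hc
      simp only [mem_filter] at hc
      rw [hc.2]
    calc ∑ c ∈ univ.filter (fun c => E c = v), w (lab c) * |D c - σ (E c)|
        = ∑ c ∈ univ.filter (fun c => E c = v), w (lab c) * |D c - σ v| := by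
          apply Finset.sum_congr rfl; intro c hc; rw [h1 c hc]
      _ ≤ ∑ c ∈ univ.filter (fun c => E c = v), w (lab c) * |D c - E c| := by
          have := (hspec v ⟨c1, hc1⟩).2.2
          calc _ ≤ ∑ c ∈ univ.filter (fun c => E c = v), w (lab c) * |D c - v| := this
            _ = _ := by
              apply Finset.sum_congr rfl
              intro c hc
              simp only [mem_filter] at hc
              rw [hc.2]
/-- On the full line metric, for a uniform coincidence constraint containing the zero
profile and closed under addition: if a `(δ≤τ)`-repair of `D` exists, then there is an
optimal `(δ≤τ)`-repair whose values lie in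
`Vals(D) ∪ {v + w(a)·τ} ∪ {v − w(a)·τ}` for `v ∈ Vals(D)`, `a ∈ A`. -/
theorem stmt_11 {C A : Type*} [Fintype C] [Fintype A]
    (lab : C → A) (w : A → ℝ) (hw : ∀ a, 0 ≤ w a)
    (Γ : Set (A → ℕ))
    (hzero : (fun _ => 0) ∈ Γ)
    (hadd : ∀ p q : A → ℕ, p ∈ Γ → q ∈ Γ → (fun a => p a + q a) ∈ Γ)
    (τ : ℝ) (hτ : 0 ≤ τ) (D : C → ℝ)
    (hex : ∃ E : C → ℝ,
      (∀ v : ℝ, (fun a => {c : C | lab c = a ∧ E c = v}.ncard) ∈ Γ) ∧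
      (∀ c, |D c - E c| ≤ w (lab c) * τ)) :
    ∃ E : C → ℝ,
      (∀ v : ℝ, (fun a => {c : C | lab c = a ∧ E c = v}.ncard) ∈ Γ) ∧
      (∀ c, |D c - E c| ≤ w (lab c) * τ) ∧
      (∀ E' : C → ℝ,
        (∀ v : ℝ, (fun a => {c : C | lab c = a ∧ E' c = v}.ncard) ∈ Γ) →
        (∀ c, |D c - E' c| ≤ w (lab c) * τ) →
        ∑ c : C, w (lab c) * |D c - E c| ≤ ∑ c : C, w (lab c) * |D c - E' c|) ∧
      (∀ c : C, (∃ c' : C, E c = D c') ∨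
        (∃ (c' : C) (a : A), E c = D c' + w a * τ) ∨
        (∃ (c' : C) (a : A), E c = D c' - w a * τ)) := by
  classical
  obtain ⟨E₀, hΓ₀, hE₀⟩ := hex
  set S : Finset ℝ := univ.image D
      ∪ (univ : Finset (C × A)).image (fun p => D p.1 + w p.2 * τ)
      ∪ (univ : Finset (C × A)).image (fun p => D p.1 - w p.2 * τ) with hS
  have hGS : ∀ x : ℝ, GoodVal D w τ x → x ∈ S := by
    intro x hx
    simp only [hS, mem_union, mem_image, mem_univ, true_and]
    rcases hx with ⟨c', rfl⟩ | ⟨c', a, rfl⟩ | ⟨c', a, rfl⟩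
    · exact Or.inl (Or.inl ⟨c', rfl⟩)
    · exact Or.inl (Or.inr ⟨(c', a), rfl⟩)
    · exact Or.inr ⟨(c', a), rfl⟩
  have hSG : ∀ x : ℝ, x ∈ S → GoodVal D w τ x := by
    intro x hx
    simp only [hS, mem_union, mem_image, mem_univ, true_and] at hx
    rcases hx with (⟨c', -, rfl⟩ | ⟨p, rfl⟩) | ⟨p, rfl⟩
    · exact Or.inl ⟨c', rfl⟩
    · exact Or.inr (Or.inl ⟨p.1, p.2, rfl⟩)
    · exact Or.inr (Or.inr ⟨p.1, p.2, rfl⟩)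
  set 𝓕 : Set (C → ℝ) := {F | (∀ c, F c ∈ S) ∧
      (∀ v : ℝ, (fun a => {c : C | lab c = a ∧ F c = v}.ncard) ∈ Γ) ∧
      (∀ c, |D c - F c| ≤ w (lab c) * τ)} with h𝓕
  have hfin : 𝓕.Finite := by
    apply Set.Finite.subset (Set.Finite.pi (fun _ : C => S.finite_toSet))
    intro F hF
    simp only [Set.mem_pi, Set.mem_univ, forall_true_left]
    intro c
    exact hF.1 c
  obtain ⟨E₁, hG₁, hΓ₁, hE₁, -⟩ := transform lab w τ Γ hzero hadd D E₀ hΓ₀ hE₀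
  have hne : 𝓕.Nonempty := ⟨E₁, fun c => hGS _ (hG₁ c), hΓ₁, hE₁⟩
  obtain ⟨E, hEF, hEmin⟩ := Set.exists_min_image 𝓕
    (fun F => ∑ c : C, w (lab c) * |D c - F c|) hfin hne
  obtain ⟨hES, hEΓ, hEτ⟩ := hEF
  refine ⟨E, hEΓ, hEτ, ?_, fun c => hSG _ (hES c)⟩
  intro E' hΓ' hE'
  obtain ⟨E₂, hG₂, hΓ₂, hE₂, hcost₂⟩ := transform lab w τ Γ hzero hadd D E' hΓ' hE'
  have h₂F : E₂ ∈ 𝓕 := ⟨fun c => hGS _ (hG₂ c), hΓ₂, hE₂⟩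
  exact le_trans (hEmin E₂ h₂F) hcost₂
end

section
/- Let V be a finite set of variables and F a finite set of clauses, where each clause f ∈ F is a nonempty finite set of literals, a literal being a pair (x, b) ∈ V × Bool. Consider the vertex set P = F ⊕ V ⊕ (V × Bool), with adjacency: a clause vertex f is adjacent to a literal vertex (x, b) iff (x, b) ∈ f, and a variable vertex x is adjacent to the literal vertices (x, true) and (x, false); no other pairs of vertices are adjacent. Then the following are equivalent: (1) there exist functions E₁ : F → P and E₂ : V → P such that for every f ∈ F, E₁(f) equals the clause vertex f or is adjacent to it; for every x ∈ V, E₂(x) equals the variable vertex x or is adjacent to it; and every point of P in the image of E₁ is also in the image of E₂; (2) there exists an assignment σ : V → Bool such that every clause f ∈ F contains a literal (x, b) with σ(x) = b. (Correctness of the reduction from SAT showing NP-hardness of deciding existence of a (δ≤τ)-repair under the inclusion constraint A₁ ⊑ A₂.) -/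
/-- Adjacency of the graph built from a CNF formula: a clause vertex `f` is adjacent to
a literal vertex `l` iff `l ∈ cl f`, and a variable vertex `x` is adjacent to the
literal vertices `(x, true)` and `(x, false)`; no other pairs are adjacent. -/
def SatAdj {V F : Type*} (cl : F → Finset (V × Bool)) :
    (F ⊕ V ⊕ V × Bool) → (F ⊕ V ⊕ V × Bool) → Prop
  | Sum.inl f, Sum.inr (Sum.inr l) => l ∈ cl f
  | Sum.inr (Sum.inr l), Sum.inl f => l ∈ cl f
  | Sum.inr (Sum.inl x), Sum.inr (Sum.inr l) => l.1 = x
  | Sum.inr (Sum.inr l), Sum.inr (Sum.inl x) => l.1 = x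
  | _, _ => False

/-- Correctness of the reduction from SAT: in the clause/variable/literal graph, there
exist placements `E₁` of the clause cells and `E₂` of the variable cells, each moving by
at most one edge, such that every point holding a clause cell also holds a variable cell
(inclusion constraint `A₁ ⊑ A₂`), if and only if the formula is satisfiable. -/
theorem stmt_12 {V F : Type*} [Fintype V] [Fintype F]
    (cl : F → Finset (V × Bool)) (hne : ∀ f, (cl f).Nonempty) :
    (∃ (E₁ : F → F ⊕ V ⊕ V × Bool) (E₂ : V → F ⊕ V ⊕ V × Bool),
      (∀ f : F, E₁ f = Sum.inl f ∨ SatAdj cl (Sum.inl f) (E₁ f)) ∧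
      (∀ x : V, E₂ x = Sum.inr (Sum.inl x) ∨
        SatAdj cl (Sum.inr (Sum.inl x)) (E₂ x)) ∧
      (∀ p : F ⊕ V ⊕ V × Bool, (∃ f, E₁ f = p) → ∃ x, E₂ x = p)) ↔
    (∃ σ : V → Bool, ∀ f : F, ∃ l ∈ cl f, σ l.1 = l.2) := by
  constructor
  · rintro ⟨E₁, E₂, h1, h2, h3⟩
    refine ⟨fun x => match E₂ x with
      | Sum.inr (Sum.inr l) => l.2
      | _ => true, fun f => ?_⟩
    -- E₁ f must be a literal vertex
    have hf : ∃ l : V × Bool, E₁ f = Sum.inr (Sum.inr l) ∧ l ∈ cl f := by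
      rcases h1 f with h | h
      · exfalso
        obtain ⟨x, hx⟩ := h3 (Sum.inl f) ⟨f, h⟩
        rcases h2 x with h' | h'
        · rw [hx] at h'; exact Sum.inl_ne_inr h'
        · rw [hx] at h'; exact h'
      · match hE : E₁ f with
        | Sum.inl g => rw [hE] at h; exact absurd h (by simp [SatAdj])
        | Sum.inr (Sum.inl x) => rw [hE] at h; exact absurd h (by simp [SatAdj])
        | Sum.inr (Sum.inr l) => rw [hE] at h; exact ⟨l, rfl, h⟩
    obtain ⟨l, hEf, hl⟩ := hf
    obtain ⟨x, hx⟩ := h3 (Sum.inr (Sum.inr l)) ⟨f, hEf⟩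
    have hadj : l.1 = x := by
      rcases h2 x with h' | h'
      · rw [hx] at h'; simp at h'
      · rw [hx] at h'; exact h'
    refine ⟨l, hl, ?_⟩
    show (match E₂ l.1 with
      | Sum.inr (Sum.inr l) => l.2
      | _ => true) = l.2
    rw [hadj, hx]
  · rintro ⟨σ, hσ⟩
    choose l hl hsat using hσ
    refine ⟨fun f => Sum.inr (Sum.inr (l f)),
      fun x => Sum.inr (Sum.inr (x, σ x)), fun f => Or.inr (hl f),
      fun x => Or.inr rfl, ?_⟩
    rintro p ⟨f, rfl⟩
    refine ⟨(l f).1, ?_⟩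
    have := hsat f
    simp [Prod.ext_iff, this]
end

section
/- Let X be a finite set and S a finite family of subsets of X, each of size exactly 3. Then the following are equivalent: (1) there exists a function E : X → X ⊕ S such that for every x ∈ X, either E(x) = inl(x) or E(x) = inr(s) for some s ∈ S with x ∈ s, and for every point p ∈ X ⊕ S, the number of elements x ∈ X with E(x) = p is either 0 or 3; (2) there exists a subfamily S' ⊆ S whose members are pairwise disjoint and whose union is X (an exact cover of X by 3-sets). (Correctness of the reduction from exact cover by 3-sets showing NP-hardness of deciding existence of a (δ≤τ)-repair with a single attribute and a uniform coincidence constraint Γ = {0, 3}.) -/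
/-- Correctness of the reduction from exact cover by 3-sets: there is a placement `E`
of the element cells, each staying put or moving to an incident set vertex, with every
point holding either 0 or 3 cells, if and only if `X` has an exact cover by pairwise
disjoint members of `S`. -/
theorem stmt_13 {X : Type*} [Fintype X] [DecidableEq X]
    (S : Finset (Finset X)) (hS : ∀ s ∈ S, s.card = 3) :
    (∃ E : X → X ⊕ Finset X,
      (∀ x : X, E x = Sum.inl x ∨ ∃ s ∈ S, x ∈ s ∧ E x = Sum.inr s) ∧
      (∀ p : X ⊕ Finset X,
        {x : X | E x = p}.ncard = 0 ∨ {x : X | E x = p}.ncard = 3)) ↔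
    (∃ S' ⊆ S, (∀ s ∈ S', ∀ t ∈ S', s ≠ t → Disjoint s t) ∧
      ∀ x : X, ∃ s ∈ S', x ∈ s) := by
  classical
  constructor
  · rintro ⟨E, h1, h2⟩
    have key : ∀ x : X, ∃ s ∈ S, x ∈ s ∧ E x = Sum.inr s := by
      intro x
      rcases h1 x with h | h
      · exfalso
        have hset : {x' : X | E x' = Sum.inl x} = {x} := by
          ext x'
          simp only [Set.mem_setOf_eq, Set.mem_singleton_iff]
          constructor
          · intro hx'
            rcases h1 x' with h' | ⟨s, _, _, h'⟩
            · rw [h'] at hx'; exact Sum.inl.inj hx'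
            · rw [h'] at hx'; exact absurd hx' (by simp)
          · intro hx'; subst hx'; exact h
        rcases h2 (Sum.inl x) with h0 | h3 <;>
          rw [hset, Set.ncard_singleton] at * <;> omega
      · exact h
    have fib : ∀ s : Finset X, s ∈ S → (∃ x, E x = Sum.inr s) →
        {x : X | E x = Sum.inr s} = ↑s := by
      intro s hsS ⟨x0, hx0⟩
      have hsub : {x : X | E x = Sum.inr s} ⊆ ↑s := by
        intro x hx
        obtain ⟨t, _, hxt, het⟩ := key x
        rw [Set.mem_setOf_eq] at hx
        rw [hx] at het
        obtain rfl := Sum.inr.inj het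
        exact hxt
      rcases h2 (Sum.inr s) with h0 | h3
      · exact absurd h0 (by
          rw [Set.ncard_eq_zero (Set.toFinite _)]
          exact Set.nonempty_iff_ne_empty.mp ⟨x0, hx0⟩)
      · exact Set.eq_of_subset_of_ncard_le hsub
          (by rw [h3, Set.ncard_coe_finset, hS s hsS]) (Set.toFinite _)
    refine ⟨S.filter (fun s => ∃ x, E x = Sum.inr s), Finset.filter_subset _ _, ?_, ?_⟩
    · intro s hs t ht hst
      simp only [Finset.mem_filter] at hs ht
      rw [Finset.disjoint_left]
      intro x hxs hxt
      have h1' : x ∈ {x : X | E x = Sum.inr s} := by rw [fib s hs.1 hs.2]; exact hxs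
      have h2' : x ∈ {x : X | E x = Sum.inr t} := by rw [fib t ht.1 ht.2]; exact hxt
      exact hst (Sum.inr.inj (h1'.symm.trans h2'))
    · intro x
      obtain ⟨s, hsS, hxs, hEx⟩ := key x
      exact ⟨s, Finset.mem_filter.mpr ⟨hsS, x, hEx⟩, hxs⟩
  · rintro ⟨S', hS'S, hdisj, hcov⟩
    have hc : ∀ x : X, ∃ s ∈ S', x ∈ s := hcov
    choose f hfS' hxf using hc
    refine ⟨fun x => Sum.inr (f x), ?_, ?_⟩
    · intro x
      exact Or.inr ⟨f x, hS'S (hfS' x), hxf x, rfl⟩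
    · intro p
      rcases p with y | t
      · left
        simp [Set.ncard_eq_zero (Set.toFinite _)]
      · by_cases ht : t ∈ S'
        · right
          have hset : {x : X | Sum.inr (f x) = (Sum.inr t : X ⊕ Finset X)} = ↑t := by
            ext x
            simp only [Set.mem_setOf_eq, Sum.inr.injEq, Finset.coe_mem, Finset.mem_coe]
            constructor
            · rintro rfl; exact hxf x
            · intro hxt
              by_contra hne
              exact Finset.disjoint_left.mp (hdisj _ (hfS' x) _ ht hne) (hxf x) hxt
          rw [hset, Set.ncard_coe_finset]
          exact hS t (hS'S ht)
        · left
          rw [Set.ncard_eq_zero (Set.toFinite _)]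
          ext x
          simp only [Set.mem_setOf_eq, Sum.inr.injEq, Set.mem_empty_iff_false, iff_false]
          rintro rfl
          exact ht (hfS' x)
end
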